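/- Let n ≥ 1, p ≥ 1, and ε > 0. Let f : ℝⁿ → ℝ be a C² convex function. Then the vector field V_ε(x) = (‖∇f(x)‖² + ε)^{(p-2)/2} ∇f(x) has nonnegative divergence at every point of ℝⁿ: div V_ε(x) = Σ_{i=1}^n ⟨(fderiv of V_ε at x)(e_i), e_i⟩ ≥ 0. (Inequality (1.7) of the paper, with ε = 1/j, in the Euclidean case.) -/

import Mathlib

open scoped RealInnerProductSpace
open MeasureTheory Filter Metric Real

variable {n : ℕ}

local notation "E" => EuclideanSpace ℝ (Fin n)

noncomputable def dualCLM (n : ℕ) : (StrongDual ℝ E) →L[ℝ] E :=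
  (InnerProductSpace.toDual ℝ E).symm.toContinuousLinearEquiv.toContinuousLinearMap

lemma dualCLM_inner (ψ : StrongDual ℝ E) (w : E) : ⟪dualCLM n ψ, w⟫ = ψ w := by
  simp [dualCLM, InnerProductSpace.toDual_symm_apply]

lemma grad_hasFDerivAt {f : E → ℝ} (hf : ContDiff ℝ 2 f) (y : E) :
    HasFDerivAt (gradient f) ((dualCLM n).comp (fderiv ℝ (fderiv ℝ f) y)) y := by
  have hf1 : ContDiff ℝ 1 (fderiv ℝ f) := hf.fderiv_right (le_refl 2)
  have h1 : HasFDerivAt (fderiv ℝ f) (fderiv ℝ (fderiv ℝ f) y) y :=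
    (hf1.differentiable one_ne_zero y).hasFDerivAt
  exact ((dualCLM n).hasFDerivAt).comp y h1

lemma inner_grad {f : E → ℝ} (y v : E) : ⟪gradient f y, v⟫ = fderiv ℝ f y v := by
  simp [gradient, InnerProductSpace.toDual_symm_apply]

lemma grad_mono {f : E → ℝ} (hf : ContDiff ℝ 2 f) (hconv : ConvexOn ℝ Set.univ f)
    (a b : E) : ⟪gradient f a, b - a⟫ ≤ ⟪gradient f b, b - a⟫ := by
  set v : E := b - a with hv
  have hdf : Differentiable ℝ f := hf.differentiable (by norm_num)
  set φ : ℝ → ℝ := fun t => f (a + t • v) with hφ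
  have hline : ∀ t : ℝ, HasDerivAt (fun t : ℝ => a + t • v) v t := by
    intro t
    simpa using ((hasDerivAt_id t).smul_const v).const_add a
  have hder : ∀ t : ℝ, HasDerivAt φ ⟪gradient f (a + t • v), v⟫ t := by
    intro t
    have h := (hdf (a + t • v)).hasFDerivAt.comp_hasDerivAt t (hline t)
    rw [inner_grad]
    exact h
  have hφconv : ConvexOn ℝ Set.univ φ := by
    have h2 := hconv.comp_affineMap (AffineMap.lineMap a b : ℝ →ᵃ[ℝ] E)
    simp only [Set.preimage_univ] at h2
    have he : φ = f ∘ (AffineMap.lineMap a b) := by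
      funext t
      simp only [hφ, Function.comp_apply, AffineMap.lineMap_apply, vsub_eq_sub, vadd_eq_add, hv]
      congr 1
      module
    rw [he]; exact h2
  have hmono : MonotoneOn (deriv φ) Set.univ :=
    hφconv.monotoneOn_deriv (fun t _ => (hder t).differentiableAt)
  have h01 : deriv φ 0 ≤ deriv φ 1 :=
    hmono (Set.mem_univ 0) (Set.mem_univ 1) zero_le_one
  rw [(hder 0).deriv, (hder 1).deriv] at h01
  have e0 : a + (0:ℝ) • v = a := by simp
  have e1 : a + (1:ℝ) • v = b := by simp [hv]
  rw [e0, e1] at h01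
  exact h01

lemma hess_psd {f : E → ℝ} (hf : ContDiff ℝ 2 f) (hconv : ConvexOn ℝ Set.univ f)
    (x v : E) : 0 ≤ ⟪((dualCLM n).comp (fderiv ℝ (fderiv ℝ f) x)) v, v⟫ := by
  set H := (dualCLM n).comp (fderiv ℝ (fderiv ℝ f) x) with hH
  set h : ℝ → ℝ := fun t => ⟪gradient f (x + t • v), v⟫ with hh
  -- h has derivative ⟪H v, v⟫ at 0
  have hline : ∀ t : ℝ, HasDerivAt (fun t : ℝ => x + t • v) v t := by
    intro t; simpa using ((hasDerivAt_id t).smul_const v).const_add x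
  have hgt : HasDerivAt (fun t : ℝ => gradient f (x + t • v)) (H v) 0 := by
    have := (grad_hasFDerivAt hf (x + (0:ℝ) • v)).comp_hasDerivAt 0 (hline 0)
    simp only [zero_smul, add_zero] at this
    exact this
  have hderh : HasDerivAt h ⟪H v, v⟫ 0 := by
    have := (hgt.hasFDerivAt.inner ℝ (hasFDerivAt_const v 0)).hasDerivAt
    simp only [ContinuousLinearMap.zero_apply] at this
    simpa [hh, inner_add_left, inner_add_right] using this
  have h0 : h 0 = ⟪gradient f x, v⟫ := by simp [hh]
  have hmono : ∀ t : ℝ, 0 < t → h 0 ≤ h t := by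
    intro t ht
    have hgm := grad_mono hf hconv x (x + t • v)
    have hsub : x + t • v - x = t • v := by abel
    rw [hsub, real_inner_smul_right, real_inner_smul_right] at hgm
    have := le_of_mul_le_mul_left hgm ht
    rw [h0]; exact this
  have htend : Tendsto (slope h 0) (nhdsWithin 0 (Set.Ioi 0)) (nhds ⟪H v, v⟫) := by
    have := hasDerivAt_iff_tendsto_slope.mp hderh
    exact this.mono_left (nhdsWithin_mono 0 (fun t ht => ne_of_gt ht))
  refine ge_of_tendsto htend ?_
  refine Filter.eventually_of_mem self_mem_nhdsWithin (fun t ht => ?_)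
  have ht : (0:ℝ) < t := ht
  rw [slope_def_field]
  have := hmono t ht
  have : 0 ≤ h t - h 0 := sub_nonneg.mpr this
  have : 0 ≤ (h t - h 0) / (t - 0) := div_nonneg this (by linarith)
  simpa [div_eq_inv_mul] using this
lemma amgm_aux (a b c d e : ℝ) (h : c^2 ≤ d*e) (hd : 0 ≤ d) (he : 0 ≤ e) :
    2*(a*b*c) ≤ a^2*e + b^2*d := by
  have h1 : |c| ≤ Real.sqrt d * Real.sqrt e := by
    rw [← Real.sqrt_mul_self (abs_nonneg c), ← Real.sqrt_mul hd]
    exact Real.sqrt_le_sqrt (by nlinarith [sq_abs c])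
  have h2 : 2 * (a*b*c) ≤ 2 * (|a| * |b| * |c|) := by
    have : a*b*c ≤ |a*b*c| := le_abs_self _
    rw [abs_mul, abs_mul] at this
    linarith
  have h3 : 2 * (|a| * |b| * |c|) ≤ 2 * (|a| * |b| * (Real.sqrt d * Real.sqrt e)) := by
    have := mul_le_mul_of_nonneg_left h1 (mul_nonneg (abs_nonneg a) (abs_nonneg b))
    linarith
  have h4 : 2 * (|a| * |b| * (Real.sqrt d * Real.sqrt e)) ≤ a^2*e + b^2*d := by
    nlinarith [sq_nonneg (|a| * Real.sqrt e - |b| * Real.sqrt d), Real.sq_sqrt hd,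
      Real.sq_sqrt he, sq_abs a, sq_abs b]
  linarith

lemma psd_cs {H : (EuclideanSpace ℝ (Fin n)) →L[ℝ] EuclideanSpace ℝ (Fin n)}
    (hsymm : ∀ v w : E, ⟪H v, w⟫ = ⟪H w, v⟫)
    (hpsd : ∀ v : E, 0 ≤ ⟪H v, v⟫) (v w : E) :
    ⟪H v, w⟫ ^ 2 ≤ ⟪H v, v⟫ * ⟪H w, w⟫ := by
  have key : ∀ t : ℝ, 0 ≤ ⟪H w, w⟫ * (t * t) + (2 * ⟪H v, w⟫) * t + ⟪H v, v⟫ := by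
    intro t
    have h := hpsd (v + t • w)
    have hexp : ⟪H (v + t • w), v + t • w⟫
        = ⟪H v, v⟫ + t * ⟪H v, w⟫ + t * ⟪H w, v⟫ + (t * t) * ⟪H w, w⟫ := by
      simp only [map_add, _root_.map_smul, inner_add_left, inner_add_right,
        real_inner_smul_left, real_inner_smul_right]
      ring
    rw [hexp, hsymm w v] at h
    linarith [h]
  have hd := discrim_le_zero key
  rw [discrim] at hd
  nlinarith [hd]

lemma psd_trace_bound {H : (EuclideanSpace ℝ (Fin n)) →L[ℝ] EuclideanSpace ℝ (Fin n)}
    (hsymm : ∀ v w : E, ⟪H v, w⟫ = ⟪H w, v⟫)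
    (hpsd : ∀ v : E, 0 ≤ ⟪H v, v⟫) (u : E) :
    ⟪H u, u⟫ ≤ (∑ i : Fin n, ⟪H (EuclideanSpace.single i 1), EuclideanSpace.single i 1⟫) * ‖u‖ ^ 2 := by
  set b := EuclideanSpace.basisFun (Fin n) ℝ with hb
  have hbi : ∀ i, (EuclideanSpace.single i 1 : E) = b i := fun i => by
    simp [hb, EuclideanSpace.basisFun_apply]
  set a : Fin n → ℝ := fun i => ⟪b i, u⟫ with ha
  set d : Fin n → ℝ := fun i => ⟪H (b i), b i⟫ with hdd
  have hA : ⟪H u, u⟫ = ∑ i, (∑ j, ⟪H (b i), b j⟫ * a j) * a i := by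
    rw [← b.sum_inner_mul_inner (H u) u]
    refine Finset.sum_congr rfl fun i _ => ?_
    have : ⟪H u, b i⟫ = ∑ j, ⟪H (b i), b j⟫ * a j := by
      rw [hsymm u (b i)]
      exact (b.sum_inner_mul_inner (H (b i)) u).symm
    rw [this]
  have hnorm : ∑ i, a i ^ 2 = ‖u‖ ^ 2 := by
    rw [← real_inner_self_eq_norm_sq, ← b.sum_inner_mul_inner u u]
    refine Finset.sum_congr rfl fun i _ => ?_
    rw [sq, ha]
    simp only []
    rw [real_inner_comm u (b i)]
  rw [hA]
  calc ∑ i, (∑ j, ⟪H (b i), b j⟫ * a j) * a i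
      = ∑ i, ∑ j, ⟪H (b i), b j⟫ * a j * a i := by
        simp_rw [Finset.sum_mul]
    _ ≤ ∑ i, ∑ j, (a i ^ 2 * d j + a j ^ 2 * d i) / 2 := by
        refine Finset.sum_le_sum fun i _ => Finset.sum_le_sum fun j _ => ?_
        have hcs : ⟪H (b i), b j⟫ ^ 2 ≤ d i * d j := psd_cs hsymm hpsd (b i) (b j)
        have := amgm_aux (a i) (a j) (⟪H (b i), b j⟫) (d i) (d j) hcs (hpsd (b i)) (hpsd (b j))
        nlinarith [this]
    _ = (∑ i, d i) * ‖u‖ ^ 2 := by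
        have h3 : ∀ i : Fin n, ∑ j, (a i ^ 2 * d j + a j ^ 2 * d i) / 2
            = (a i ^ 2 * (∑ j, d j) + (∑ j, a j ^ 2) * d i) / 2 := by
          intro i
          rw [← Finset.sum_div, Finset.sum_add_distrib, ← Finset.mul_sum, ← Finset.sum_mul]
        simp_rw [h3]
        rw [← Finset.sum_div, Finset.sum_add_distrib, ← Finset.sum_mul, ← Finset.mul_sum, hnorm]
        ring
    _ = (∑ i : Fin n, ⟪H (EuclideanSpace.single i 1), EuclideanSpace.single i 1⟫) * ‖u‖ ^ 2 := by
        simp_rw [hbi]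
        rfl

lemma sum_inner_single (w z : E) :
    ∑ i : Fin n, ⟪w, EuclideanSpace.single i 1⟫ * ⟪(EuclideanSpace.single i 1 : E), z⟫ = ⟪w, z⟫ := by
  have hbi : ∀ i, (EuclideanSpace.single i 1 : E) = EuclideanSpace.basisFun (Fin n) ℝ i :=
    fun i => by simp [EuclideanSpace.basisFun_apply]
  simp_rw [hbi]
  exact (EuclideanSpace.basisFun (Fin n) ℝ).sum_inner_mul_inner w z


set_option maxHeartbeats 1000000 in
/-- inequality (1.7) of the paper, with `ε = 1/j`, Euclidean case.
Let `p ≥ 1`, `ε > 0`, and let `f : ℝⁿ → ℝ` be a `C²` convex function.  Then the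
regularized vector field `V_ε = (‖∇f‖² + ε)^((p-2)/2) ∇f` has nonnegative
divergence at every point. -/
theorem convex_C2_regularized_div_nonneg
    (n : ℕ) (hn : 1 ≤ n) (p : ℝ) (hp : 1 ≤ p) (ε : ℝ) (hε : 0 < ε)
    (f : EuclideanSpace ℝ (Fin n) → ℝ)
    (hf : ContDiff ℝ 2 f)
    (hconv : ConvexOn ℝ Set.univ f)
    (V : EuclideanSpace ℝ (Fin n) → EuclideanSpace ℝ (Fin n))
    (hV : V = fun x => (‖gradient f x‖ ^ 2 + ε) ^ ((p - 2) / 2) • gradient f x)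
    (x : EuclideanSpace ℝ (Fin n)) :
    0 ≤ ∑ i : Fin n,
        ⟪fderiv ℝ V x (EuclideanSpace.single i 1), EuclideanSpace.single i 1⟫ := by
  classical
  set u : EuclideanSpace ℝ (Fin n) := gradient f x with hu
  set H : EuclideanSpace ℝ (Fin n) →L[ℝ] EuclideanSpace ℝ (Fin n) :=
    (dualCLM n).comp (fderiv ℝ (fderiv ℝ f) x) with hHdef
  have hG : HasFDerivAt (gradient f) H x := grad_hasFDerivAt hf x
  have hsymm : ∀ v w : EuclideanSpace ℝ (Fin n), ⟪H v, w⟫ = ⟪H w, v⟫ := by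
    intro v w
    have hs2 := (hf.contDiffAt (x := x)).isSymmSndFDerivAt (by norm_num)
    rw [hHdef]
    simp only [ContinuousLinearMap.comp_apply, dualCLM_inner]
    exact hs2 v w
  have hpsd : ∀ v : EuclideanSpace ℝ (Fin n), 0 ≤ ⟪H v, v⟫ := fun v =>
    hess_psd hf hconv x v
  set q : ℝ := (p - 2) / 2 with hq
  have hspos : 0 < ⟪u, u⟫ + ε := by
    have : (0:ℝ) ≤ ⟪u, u⟫ := real_inner_self_nonneg
    linarith
  -- rewrite V using inner products
  have hVfun : V = fun y => (⟪gradient f y, gradient f y⟫ + ε) ^ q • gradient f y := by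
    rw [hV]; funext y; rw [real_inner_self_eq_norm_sq]
  set N : EuclideanSpace ℝ (Fin n) →L[ℝ] ℝ :=
    (fderivInnerCLM ℝ (u, u)).comp (H.prod H) with hN
  have hinner : HasFDerivAt (fun y => ⟪gradient f y, gradient f y⟫ + ε) N x :=
    (hG.inner ℝ hG).add_const ε
  have hrpow : HasDerivAt (fun t : ℝ => t ^ q) (q * (⟪u, u⟫ + ε) ^ (q - 1)) (⟪u, u⟫ + ε) :=
    Real.hasDerivAt_rpow_const (Or.inl hspos.ne')
  have hscal : HasFDerivAt (fun y => (⟪gradient f y, gradient f y⟫ + ε) ^ q)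
      ((q * (⟪u, u⟫ + ε) ^ (q - 1)) • N) x := by
    have := hrpow.comp_hasFDerivAt x hinner
    exact this
  set D : EuclideanSpace ℝ (Fin n) →L[ℝ] EuclideanSpace ℝ (Fin n) :=
    (⟪u, u⟫ + ε) ^ q • H + ((q * (⟪u, u⟫ + ε) ^ (q - 1)) • N).smulRight u with hD
  have hVd : HasFDerivAt V D x := by
    rw [hVfun]
    have := hscal.smul hG
    exact this
  rw [hVd.fderiv]
  -- compute the divergence
  set T : ℝ := ∑ i : Fin n, ⟪H (EuclideanSpace.single i 1), (EuclideanSpace.single i 1 : EuclideanSpace ℝ (Fin n))⟫ with hT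
  have hTnn : 0 ≤ T := Finset.sum_nonneg fun i _ => hpsd _
  set A : ℝ := ⟪H u, u⟫ with hA
  have hAnn : 0 ≤ A := hpsd u
  have hAT : A ≤ T * ‖u‖ ^ 2 := psd_trace_bound hsymm hpsd u
  have hdiv : ∑ i : Fin n, ⟪D (EuclideanSpace.single i 1), (EuclideanSpace.single i 1 : EuclideanSpace ℝ (Fin n))⟫
      = (⟪u, u⟫ + ε) ^ q * T + (q * (⟪u, u⟫ + ε) ^ (q - 1)) * (2 * A) := by
    have hterm : ∀ i : Fin n,
        ⟪D (EuclideanSpace.single i 1), (EuclideanSpace.single i 1 : EuclideanSpace ℝ (Fin n))⟫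
        = (⟪u, u⟫ + ε) ^ q * ⟪H (EuclideanSpace.single i 1), (EuclideanSpace.single i 1 : EuclideanSpace ℝ (Fin n))⟫
          + (q * (⟪u, u⟫ + ε) ^ (q - 1)) * (2 * (⟪H u, EuclideanSpace.single i 1⟫ * ⟪(EuclideanSpace.single i 1 : EuclideanSpace ℝ (Fin n)), u⟫)) := by
      intro i
      rw [hD]
      simp only [hN, ContinuousLinearMap.add_apply, ContinuousLinearMap.smul_apply,
        ContinuousLinearMap.smulRight_apply, ContinuousLinearMap.comp_apply,
        fderivInnerCLM_apply, ContinuousLinearMap.prod_apply, smul_eq_mul]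
      rw [inner_add_left, real_inner_smul_left, real_inner_smul_left]
      have h1 : ⟪u, H (EuclideanSpace.single i 1)⟫ = ⟪H u, EuclideanSpace.single i 1⟫ := by
        rw [real_inner_comm, hsymm]
      have h2 : ⟪H (EuclideanSpace.single i 1), u⟫ = ⟪H u, EuclideanSpace.single i 1⟫ :=
        hsymm _ _
      rw [h1, h2, real_inner_comm u (EuclideanSpace.single i 1)]
      ring
    rw [Finset.sum_congr rfl fun i _ => hterm i, Finset.sum_add_distrib,
      ← Finset.mul_sum, ← Finset.mul_sum, hT]
    congr 1
    rw [← Finset.mul_sum, sum_inner_single (H u) u, ← hA]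
  rw [hdiv]
  -- final inequality
  have hnorm2 : ⟪u, u⟫ = ‖u‖ ^ 2 := real_inner_self_eq_norm_sq u
  set s : ℝ := ⟪u, u⟫ + ε with hs
  have hkey : 0 ≤ s * T + (p - 2) * A := by
    have h1 : 0 ≤ ε * T := mul_nonneg hε.le hTnn
    have h2 : 0 ≤ (p - 1) * A := mul_nonneg (by linarith) hAnn
    have h3 : A ≤ T * ‖u‖ ^ 2 := hAT
    rw [hs, hnorm2]
    nlinarith [h1, h2, h3]
  have hq2 : s ^ q = s ^ (q - 1) * s := by
    have h := Real.rpow_add_one hspos.ne' (q - 1)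
    rw [sub_add_cancel] at h
    exact h
  have hqpos : 0 < s ^ (q - 1) := Real.rpow_pos_of_pos hspos _
  have : s ^ q * T + q * s ^ (q - 1) * (2 * A) = s ^ (q - 1) * (s * T + (p - 2) * A) := by
    rw [hq2, hq]; ring
  rw [this]
  exact mul_nonneg hqpos.le hkey
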